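/- arXiv:2206.00875 — 4 statements merged into one kernel-verified Lean document; each statement's English description precedes it below -/
import Mathlib

section
/- Let M be a von Neumann algebra and let a ∈ M be positive, bounded, and injective. If there is a sequence (f_n) of pairwise Murray–von Neumann equivalent nonzero projections in M with ‖f_n a f_n‖ → 0, then a is not invertible in M; more strongly, for every ε > 0 there exists n with f_n ≺ χ_{(0,ε]}(a), where χ denotes the spectral projection of a. -/
variable {H : Type*} [NormedAddCommGroup H] [InnerProductSpace ℂ H] [CompleteSpace H]

/-- `p` is an orthogonal projection belonging to the von Neumann algebra `M`. -/
def IsProjIn (M : VonNeumannAlgebra H) (p : H →L[ℂ] H) : Prop :=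
  p ∈ M ∧ IsSelfAdjoint p ∧ IsIdempotentElem p

/-- The order `p ≤ q` on projections: `p * q = p`. -/
def SubProj (p q : H →L[ℂ] H) : Prop := p * q = p

/-- Murray–von Neumann equivalence of projections in `M`. -/
def MvNEquiv (M : VonNeumannAlgebra H) (p q : H →L[ℂ] H) : Prop :=
  ∃ v ∈ M, star v * v = p ∧ v * star v = q

/-- Murray–von Neumann subequivalence `p ≺ q` in `M`. -/
def MvNSub (M : VonNeumannAlgebra H) (p q : H →L[ℂ] H) : Prop :=
  ∃ v ∈ M, star v * v = p ∧ SubProj (v * star v) q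

/-- `p` is a finite projection of `M`. -/
def FiniteProj (M : VonNeumannAlgebra H) (p : H →L[ℂ] H) : Prop :=
  IsProjIn M p ∧ ∀ q, IsProjIn M q → SubProj q p → MvNEquiv M q p → q = p

open StarAlgebra in
lemma cfc_complex_mem_elemental {A : Type*} [CStarAlgebra A] (d : A) (hd : IsStarNormal d)
    (h : ℂ → ℂ) : cfc h d ∈ elemental ℂ d := by
  by_cases hh : ContinuousOn h (spectrum ℂ d)
  · rw [cfc_apply h d hd, cfcHom_eq_of_isStarNormal]
    exact ((continuousFunctionalCalculus d) _).2
  · rw [cfc_apply_of_not_continuousOn d hh]; exact zero_mem _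

open StarAlgebra in
lemma commute_of_mem_elemental {A : Type*} [CStarAlgebra A] {d c x : A}
    (hc : Commute c d) (hcs : Commute c (star d)) (hx : x ∈ elemental ℂ d) :
    Commute c x := by
  induction hx using elemental.induction_on with
  | self => exact hc
  | star_self => exact hcs
  | algebraMap r => exact (Algebra.commutes r c).symm
  | add u hu v hv hcu hcv => exact hcu.add_right hcv
  | mul u hu v hv hcu hcv => exact hcu.mul_right hcv
  | closure s hs hP v hv =>
      have hcl : IsClosed {u : A | Commute c u} :=
        isClosed_eq (continuous_const.mul continuous_id) (continuous_id.mul continuous_const)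
      exact closure_minimal (fun u hu => hP u hu) hcl hv

lemma commute_cfc_real {A : Type*} [CStarAlgebra A] {d c : A} (hd : IsSelfAdjoint d)
    (hc : Commute c d) (g : ℝ → ℝ) : Commute c (cfc g d) := by
  rw [cfc_real_eq_complex g hd]
  exact commute_of_mem_elemental hc (hd.star_eq.symm ▸ hc)
    (cfc_complex_mem_elemental d hd.isStarNormal _)

open RCLike in
lemma my_spectrum_ge {d : H →L[ℂ] H} (hd : IsSelfAdjoint d)
    (hlb : ∀ x : H, (1/2 : ℝ) * ‖x‖ ^ 2 ≤ ((inner ℂ x (d x) : ℂ)).re) :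
    ∀ t ∈ spectrum ℝ d, (1/2 : ℝ) ≤ t := by
  intro t ht
  set b : H →L[ℂ] H := d - algebraMap ℝ _ (1/2 : ℝ) with hb
  have hbsa : IsSelfAdjoint b := by
    refine hd.sub ?_
    rw [IsSelfAdjoint, Algebra.algebraMap_eq_smul_one]
    simp [star_smul]
  have hbpos : (0 : H →L[ℂ] H) ≤ b := by
    rw [ContinuousLinearMap.nonneg_iff_isPositive]
    refine ⟨ContinuousLinearMap.isSelfAdjoint_iff_isSymmetric.mp hbsa, fun x => ?_⟩
    have hx := hlb x
    have hbx : b x = d x - (1/2 : ℝ) • x := by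
      simp [hb, Algebra.algebraMap_eq_smul_one, ContinuousLinearMap.sub_apply]
    rw [ContinuousLinearMap.reApplyInnerSelf_apply, hbx]
    have h1 : (inner ℂ (d x - (1/2 : ℝ) • x) x : ℂ).re
        = (inner ℂ (d x) x : ℂ).re - (1/2 : ℝ) * ‖x‖ ^ 2 := by
      have hsm : ((1/2 : ℝ) • x) = ((1/2 : ℂ) • x) := by
        rw [RCLike.real_smul_eq_coe_smul (K := ℂ)]; norm_num
      have hxx : (inner ℂ x x : ℂ).re = ‖x‖ ^ 2 := by
        have := inner_self_eq_norm_sq (𝕜 := ℂ) x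
        simpa using this
      rw [inner_sub_left, hsm, inner_smul_left]
      simp [hxx]
      rw [← Complex.ofReal_pow, Complex.ofReal_re]
    have h2 : (inner ℂ (d x) x : ℂ).re = (inner ℂ x (d x) : ℂ).re := by
      have := inner_re_symm (𝕜 := ℂ) (d x) x
      simpa using this
    show (0:ℝ) ≤ RCLike.re (inner ℂ (d x - (1/2 : ℝ) • x) x : ℂ)
    rw [RCLike.re_to_complex, h1, h2]
    linarith
  have hmem : t - 1/2 ∈ spectrum ℝ b := by
    rw [hb, ← spectrum.sub_singleton_eq]
    exact Set.sub_mem_sub ht rfl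
  have := spectrum_nonneg_of_nonneg hbpos hmem
  linarith

lemma my_sds' {d : H →L[ℂ] H} (hd : IsSelfAdjoint d)
    (hspec : ∀ t ∈ spectrum ℝ d, (1/2 : ℝ) ≤ t) :
    ∃ g : ℝ → ℝ, cfc g d * d * cfc g d = 1 := by
  set g : ℝ → ℝ := fun t => (Real.sqrt (max 2⁻¹ t))⁻¹ with hg
  have hgc : Continuous g := by
    apply Continuous.inv₀
    · exact Real.continuous_sqrt.comp (continuous_const.max continuous_id)
    · intro t
      refine ne_of_gt (Real.sqrt_pos.mpr ?_)
      have h0 : (0:ℝ) < 2⁻¹ := by norm_num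
      exact lt_of_lt_of_le h0 (le_max_left _ _)
  refine ⟨g, ?_⟩
  have h2 : (spectrum ℝ d).EqOn (fun t => g t * t * g t) 1 := by
    intro t ht
    have h12 := hspec t ht
    have ht0 : (0:ℝ) < t := lt_of_lt_of_le (by norm_num) h12
    have hmax : max 2⁻¹ t = t := max_eq_right (le_trans (by norm_num) h12)
    have hs : Real.sqrt t ≠ 0 := ne_of_gt (Real.sqrt_pos.mpr ht0)
    simp only [hg, hmax, Pi.one_apply]
    field_simp
    rw [Real.sq_sqrt ht0.le]
  have e0 : cfc (fun t : ℝ => g t * t * g t) d = 1 := by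
    rw [cfc_congr h2]; exact cfc_one ℝ d
  have e1 : cfc (fun t : ℝ => g t * t * g t) d = cfc (fun t : ℝ => g t * t) d * cfc g d :=
    cfc_mul (fun t => g t * t) g d ((hgc.mul continuous_id).continuousOn) hgc.continuousOn
  have e2 : cfc (fun t : ℝ => g t * t) d = cfc g d * d := by
    have h3 := cfc_mul g (id : ℝ → ℝ) d hgc.continuousOn continuousOn_id
    rw [cfc_id ℝ d hd] at h3
    exact h3
  rw [← e2, ← e1, e0]

/-- If a ∈ M is positive, bounded and injective and (fₙ) is a sequence of pairwise
equivalent nonzero projections of M with ‖fₙ a fₙ‖ → 0, then a is not invertible in M;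
more strongly, for every ε > 0 there is n with fₙ ≺ χ_{(0,ε]}(a).  Here the spectral
projection e ε = χ_{(0,ε]}(a) (= χ_{[0,ε]}(a) by injectivity) is characterized as a
projection in M commuting with a, with ‖ax‖ ≤ ε‖x‖ on its range and ⟪x, ax⟫ ≥ ε‖x‖²
on the range of its complement. -/
theorem stmt5 (M : VonNeumannAlgebra H) (a : H →L[ℂ] H) (ha : a ∈ M)
    (hapos : a.IsPositive) (hainj : Function.Injective a)
    (f : ℕ → (H →L[ℂ] H)) (hf : ∀ n, IsProjIn M (f n)) (hfne : ∀ n, f n ≠ 0)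
    (hfeq : ∀ m n, MvNEquiv M (f m) (f n))
    (hlim : Filter.Tendsto (fun n => ‖f n * a * f n‖) Filter.atTop (nhds 0))
    (e : ℝ → (H →L[ℂ] H))
    (he : ∀ ε : ℝ, 0 < ε → IsProjIn M (e ε) ∧ Commute a (e ε) ∧
      (∀ x : H, (e ε) x = x → ‖a x‖ ≤ ε * ‖x‖) ∧
      (∀ x : H, (e ε) x = 0 → ε * ‖x‖ ^ 2 ≤ ((inner ℂ x (a x) : ℂ)).re)) :
    (¬ ∃ b ∈ M, a * b = 1 ∧ b * a = 1) ∧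
      ∀ ε : ℝ, 0 < ε → ∃ n, MvNSub M (f n) (e ε) := by
  have hsymm : ∀ T : H →L[ℂ] H, IsSelfAdjoint T →
      ∀ u w : H, (inner ℂ (T u) w : ℂ) = inner ℂ u (T w) := by
    intro T hT u w
    exact ContinuousLinearMap.isSelfAdjoint_iff_isSymmetric.mp hT u w
  have key : ∀ ε : ℝ, 0 < ε → ∃ n, MvNSub M (f n) (e ε) := by
    intro ε hε
    obtain ⟨⟨heM, heSA, heIdem⟩, hcomm, hsmall, hbig⟩ := he ε hε
    obtain ⟨n, hn⟩ : ∃ n, ‖f n * a * f n‖ < ε/2 := by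
      obtain ⟨N, hN⟩ := Metric.tendsto_atTop.mp hlim (ε/2) (by positivity)
      refine ⟨N, ?_⟩
      have := hN N le_rfl
      rwa [Real.dist_eq, sub_zero, abs_of_nonneg (norm_nonneg _)] at this
    obtain ⟨hpM, hpSA, hpIdem⟩ := hf n
    set q := e ε with hqdef
    set p := f n with hpdef
    set d : H →L[ℂ] H := p * q * p + (1 - p) with hddef
    -- the key analytic estimate
    have hcore : ∀ x : H, (1/2 : ℝ) * ‖x‖ ^ 2 ≤ ((inner ℂ x (d x) : ℂ)).re := by
      intro x
      set y := p x with hy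
      set z := y - q y with hz
      have hqz : q z = 0 := by
        have hqq : q (q y) = q y := by rw [← ContinuousLinearMap.mul_apply, heIdem.eq]
        rw [hz, map_sub, hqq, sub_self]
      have h1 : ε * ‖z‖ ^ 2 ≤ (inner ℂ z (a z) : ℂ).re := hbig z hqz
      -- re ⟪z, a z⟫ ≤ re ⟪y, a y⟫
      have hqa : ∀ u : H, q (a u) = a (q u) := by
        intro u
        rw [← ContinuousLinearMap.mul_apply, ← ContinuousLinearMap.mul_apply, ← hcomm.eq]
      have hcross1 : (inner ℂ (q y) (a z) : ℂ) = 0 := by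
        rw [hsymm q heSA y (a z), hqa z, hqz, map_zero, inner_zero_right]
      have hcross2 : (inner ℂ z (a (q y)) : ℂ) = 0 := by
        rw [← hqa y, ← hsymm q heSA z (a y), hqz, inner_zero_left]
      have hdecomp : q y + z = y := by rw [hz]; abel
      have hexp : (inner ℂ y (a y) : ℂ) = inner ℂ (q y) (a (q y)) + inner ℂ z (a z) := by
        conv_lhs => rw [← hdecomp]
        rw [map_add, inner_add_left, inner_add_right, inner_add_right, hcross1, hcross2]
        ring
      have hpos0 : (0:ℝ) ≤ (inner ℂ (q y) (a (q y)) : ℂ).re := by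
        have := hapos.inner_nonneg_right (q y)
        exact (Complex.nonneg_iff.mp this).1
      have h2 : (inner ℂ z (a z) : ℂ).re ≤ (inner ℂ y (a y) : ℂ).re := by
        rw [hexp, Complex.add_re]; linarith
      -- re ⟪y, a y⟫ ≤ (ε/2) ‖x‖²
      have h3 : (inner ℂ y (a y) : ℂ).re ≤ ε/2 * ‖x‖ ^ 2 := by
        have hyx : (inner ℂ y (a y) : ℂ) = inner ℂ x ((p * a * p) x) := by
          have happ : (p * a * p) x = p (a (p x)) := by
            simp [ContinuousLinearMap.mul_apply]
          rw [happ, hy]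
          exact hsymm p hpSA x (a (p x))
        have hb1 : (inner ℂ x ((p * a * p) x) : ℂ).re ≤ ‖(inner ℂ x ((p * a * p) x) : ℂ)‖ := by
          have := RCLike.re_le_norm (K := ℂ) (inner ℂ x ((p * a * p) x))
          simpa using this
        have hb2 : ‖(inner ℂ x ((p * a * p) x) : ℂ)‖ ≤ ‖x‖ * ‖(p * a * p) x‖ :=
          norm_inner_le_norm _ _
        have hb3 : ‖(p * a * p) x‖ ≤ ‖p * a * p‖ * ‖x‖ := (p * a * p).le_opNorm x
        have hb4 : ‖p * a * p‖ * ‖x‖ ≤ ε/2 * ‖x‖ := by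
          exact mul_le_mul_of_nonneg_right hn.le (norm_nonneg x)
        rw [hyx]
        calc (inner ℂ x ((p * a * p) x) : ℂ).re ≤ ‖x‖ * ‖(p * a * p) x‖ := hb1.trans hb2
          _ ≤ ‖x‖ * (ε/2 * ‖x‖) :=
            mul_le_mul_of_nonneg_left (hb3.trans hb4) (norm_nonneg x)
          _ = ε/2 * ‖x‖ ^ 2 := by ring
      have hz2 : ‖z‖ ^ 2 ≤ 1/2 * ‖x‖ ^ 2 := by
        have hmul : ε * ‖z‖ ^ 2 ≤ ε * (1/2 * ‖x‖ ^ 2) := by linarith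
        exact (mul_le_mul_iff_right₀ hε).mp hmul
      -- re ⟪x, d x⟫ = ‖x‖² - ‖z‖²
      have hpp : p (p x) = p x := by rw [← ContinuousLinearMap.mul_apply, hpIdem.eq]
      have hA : (inner ℂ x ((p * q * p) x) : ℂ) = inner ℂ y (q y) := by
        have happ : (p * q * p) x = p (q y) := by
          simp [ContinuousLinearMap.mul_apply, hy]
        rw [happ, hy]
        exact (hsymm p hpSA x (q y)).symm
      have hyz : (inner ℂ y z : ℂ) = inner ℂ z z := by
        conv_lhs => rw [← hdecomp]
        rw [inner_add_left, hsymm q heSA y z, hqz, inner_zero_right, zero_add]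
      have hB : (inner ℂ y (q y) : ℂ) = inner ℂ y y - inner ℂ z z := by
        have hqy : q y = y - z := by rw [hz]; abel
        rw [hqy, inner_sub_right, hyz]
      have hC : (inner ℂ x (p x) : ℂ) = inner ℂ y y := by
        conv_lhs => rw [← hpp]
        rw [← hsymm p hpSA x (p x), hy]
      have hdx : d x = (p * q * p) x + x - p x := by
        simp only [hddef, ContinuousLinearMap.add_apply, ContinuousLinearMap.sub_apply,
          ContinuousLinearMap.one_apply, ContinuousLinearMap.mul_apply]
        abel
      have hxd : (inner ℂ x (d x) : ℂ) = inner ℂ x x - inner ℂ z z := by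
        rw [hdx, inner_sub_right, inner_add_right, hA, hB, hC]
        ring
      have hxx : (inner ℂ x x : ℂ).re = ‖x‖ ^ 2 := by
        have := inner_self_eq_norm_sq (𝕜 := ℂ) x
        simpa using this
      have hzz : (inner ℂ z z : ℂ).re = ‖z‖ ^ 2 := by
        have := inner_self_eq_norm_sq (𝕜 := ℂ) z
        simpa using this
      rw [hxd, Complex.sub_re, hxx, hzz]
      linarith
    -- self-adjointness of d and the inverse square root s
    have hdsa : IsSelfAdjoint d := by
      rw [IsSelfAdjoint, hddef]
      simp [star_sub, star_add, star_mul, hpSA.star_eq, heSA.star_eq, mul_assoc]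
    obtain ⟨g, hg1⟩ := my_sds' hdsa (my_spectrum_ge hdsa hcore)
    set s := cfc g d with hsdef
    have hssa : IsSelfAdjoint s := cfc_predicate g d
    have hdM : d ∈ M := by
      exact add_mem (mul_mem (mul_mem hpM heM) hpM) (sub_mem (one_mem M) hpM)
    have hsM : s ∈ M := by
      rw [← SetLike.mem_coe, ← M.centralizer_centralizer, Set.mem_centralizer_iff]
      intro c hc
      have hcd : Commute c d := ((Set.mem_centralizer_iff.mp hc) d hdM).symm
      exact (commute_cfc_real hdsa hcd g).eq
    have hdp : d * p = p * (q * p) := by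
      have h5 : d * p = p * (q * (p * p)) + (p - p * p) := by
        simp [hddef, add_mul, sub_mul, one_mul, mul_assoc]
      rw [h5, hpIdem.eq]
      simp
    have hpd : Commute p d := by
      have h6 : p * d = p * (q * p) := by
        have h7 : p * d = p * (p * (q * p)) + (p - p * p) := by
          simp [hddef, mul_add, mul_sub, mul_one, mul_assoc]
        rw [h7, ← mul_assoc p p, hpIdem.eq]
        simp [mul_assoc]
      rw [Commute, SemiconjBy, h6, hdp]
    have hps : Commute p s := commute_cfc_real hdsa hpd g
    set v : H →L[ℂ] H := q * p * s with hvdef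
    have hvM : v ∈ M := mul_mem (mul_mem heM hpM) hsM
    have hstarv : star v = s * (p * q) := by
      simp [hvdef, star_mul, hssa.star_eq, hpSA.star_eq, heSA.star_eq, mul_assoc]
    have hvv : star v * v = p := by
      have h4 : star v * v = s * (p * (q * (p * s))) := by
        rw [hstarv, hvdef]
        simp only [mul_assoc]
        rw [← mul_assoc q q (p * s), heIdem.eq]
      have h5 : (s * d) * (s * p) = s * (p * (q * (p * s))) := by
        rw [← hps.eq, mul_assoc s d (p * s), ← mul_assoc d p s, hdp]
        simp only [mul_assoc]
      rw [h4, ← h5, ← mul_assoc (s * d) s p, hg1, one_mul]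
    have hsub : SubProj (v * star v) q := by
      show v * star v * q = v * star v
      rw [hstarv, hvdef]
      simp only [mul_assoc]
      rw [heIdem.eq]
    exact ⟨n, v, hvM, hvv, hsub⟩
  refine ⟨?_, key⟩
  rintro ⟨b, hbM, hab, hba⟩
  have hb0 : b ≠ 0 := by
    rintro rfl
    have h10 : (1 : H →L[ℂ] H) = 0 := hab.symm.trans (mul_zero a)
    exact hfne 0 (by rw [← mul_one (f 0), h10, mul_zero])
  have hbn : 0 < ‖b‖ := norm_pos_iff.mpr hb0
  set ε := (2 * ‖b‖)⁻¹ with hεdef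
  have hε : 0 < ε := by positivity
  obtain ⟨⟨heM, heSA, heIdem⟩, hcomm, hsmall, hbig⟩ := he ε hε
  obtain ⟨n, v, hvM, hvv, hsub⟩ := key ε hε
  have hene : e ε ≠ 0 := by
    intro h0
    apply hfne n
    have h1 : v * star v = 0 := by
      have := hsub
      rw [SubProj, h0, mul_zero] at this
      exact this.symm
    have h2 : f n * f n = 0 := by
      rw [← hvv]
      calc star v * v * (star v * v) = star v * (v * star v) * v := by
            simp only [mul_assoc]
        _ = 0 := by rw [h1]; simp
    rw [(hf n).2.2.eq] at h2
    exact h2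
  obtain ⟨y, hy⟩ : ∃ y, e ε y ≠ 0 := by
    by_contra h
    push_neg at h
    exact hene (ContinuousLinearMap.ext fun y => by simp [h y])
  set x := e ε y with hxdef
  have hx : e ε x = x := by
    show e ε (e ε y) = e ε y
    rw [← ContinuousLinearMap.mul_apply, heIdem.eq]
  have hax : ‖a x‖ ≤ ε * ‖x‖ := hsmall x hx
  have hxb : ‖x‖ ≤ ‖b‖ * ‖a x‖ := by
    have hbax : x = b (a x) := by
      rw [← ContinuousLinearMap.mul_apply, hba, ContinuousLinearMap.one_apply]
    calc ‖x‖ = ‖b (a x)‖ := by rw [← hbax]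
      _ ≤ ‖b‖ * ‖a x‖ := b.le_opNorm _
  have hxpos : 0 < ‖x‖ := norm_pos_iff.mpr hy
  have hfinal : ‖x‖ ≤ ‖b‖ * (ε * ‖x‖) :=
    hxb.trans (mul_le_mul_of_nonneg_left hax (norm_nonneg b))
  have hεval : ‖b‖ * (ε * ‖x‖) = ‖x‖ / 2 := by
    rw [hεdef]
    field_simp
  linarith
end

section
/- Let N be a von Neumann algebra, let ψ: N → N be a map of the form ψ(a) = y a y⁻¹ for an invertible y ∈ N with polar decomposition y = u|y|, u unitary. If ψ maps every partial isometry of N to a partial isometry, then |y| lies in the center of N. -/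
variable {H : Type*} [NormedAddCommGroup H] [InnerProductSpace ℂ H] [CompleteSpace H]

set_option synthInstance.maxHeartbeats 400000
set_option maxHeartbeats 1000000

lemma isClosed_centralizer' {A : Type*} [NormedRing A] (s : Set A) :
    IsClosed (Set.centralizer s) := by
  have h : Set.centralizer s = ⋂ g ∈ s, {x | g * x = x * g} := by
    ext x; simp [Set.mem_centralizer_iff]
  rw [h]
  exact isClosed_biInter fun g _ => isClosed_eq (continuous_mul_left g) (continuous_mul_right g)

lemma cfc_mem_of_isClosed' {A : Type*} [CStarAlgebra A] {S : StarSubalgebra ℂ A}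
    (hS : IsClosed (S : Set A)) {a : A} (haS : a ∈ S) (ha : IsSelfAdjoint a) (f : ℝ → ℝ) :
    cfc f a ∈ S := by
  rw [cfc_real_eq_complex f ha]
  refine cfc_cases (· ∈ S) a _ (zero_mem S) fun hf hna => ?_
  rw [cfcHom_eq_of_isStarNormal (ha := hna) a]
  exact StarAlgebra.elemental.le_of_mem hS haS (SetLike.coe_mem _)

/-- If y ∈ N is invertible with polar decomposition y = u|y| (u unitary, |y| ≥ 0,
|y|² = y*y) and conjugation by y maps every partial isometry of N to a partial
isometry, then |y| is central in N. -/
theorem stmt8 (N : VonNeumannAlgebra H) (y y' m u : H →L[ℂ] H)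
    (hy : y ∈ N) (hy' : y' ∈ N) (hm : m ∈ N) (hu : u ∈ N)
    (hinv₁ : y * y' = 1) (hinv₂ : y' * y = 1)
    (hmpos : m.IsPositive) (hmsq : m * m = star y * y)
    (huni₁ : star u * u = 1) (huni₂ : u * star u = 1)
    (hpolar : y = u * m)
    (hpi : ∀ v ∈ N, v * star v * v = v →
      (y * v * y') * star (y * v * y') * (y * v * y') = y * v * y') :
    ∀ a ∈ N, m * a = a * m := by
  have hmsa : IsSelfAdjoint m := hmpos.isSelfAdjoint
  -- Step 1: for every unitary w in N, m² commutes with w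
  have key : ∀ w ∈ (N : Set (H →L[ℂ] H)), star w * w = 1 → w * star w = 1 →
      (m * m) * w = w * (m * m) := by
    intro w hwN hw1 hw2
    have hpiw := hpi w hwN (by rw [hw2, one_mul])
    set z := y * w * y' with hzdef
    set z'' := y * star w * y' with hz''def
    have hz1 : z * z'' = 1 := by
      calc z * z'' = y * (w * ((y' * y) * star w)) * y' := by
            simp only [hzdef, hz''def, mul_assoc]
        _ = 1 := by rw [hinv₂, one_mul, hw2, mul_one, hinv₁]
    have hz2 : z'' * z = 1 := by
      calc z'' * z = y * (star w * ((y' * y) * w)) * y' := by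
            simp only [hzdef, hz''def, mul_assoc]
        _ = 1 := by rw [hinv₂, one_mul, hw1, mul_one, hinv₁]
    have e1 : z * star z = 1 := by
      have h := congrArg (· * z'') hpiw
      simpa only [mul_assoc, hz1, mul_one] using h
    have e2 : star z = z'' := by
      have h := congrArg (z'' * ·) e1
      simpa only [← mul_assoc, hz2, one_mul, mul_one] using h
    have e3 : star z * z = 1 := by rw [e2, hz2]
    have e4 : star y' * (star w * ((star y * y) * w)) * y' = 1 := by
      calc star y' * (star w * ((star y * y) * w)) * y'
          = (star y' * (star w * star y)) * (y * w * y') := by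
            simp only [mul_assoc]
        _ = star z * z := by rw [hzdef]; simp only [star_mul, mul_assoc]
        _ = 1 := e3
    have e5 : star w * ((m * m) * w) = m * m := by
      have h := congrArg (fun x => star y * x * y) e4
      simp only [mul_one] at h
      have hyy : star y * star y' = 1 := by rw [← star_mul, hinv₂, star_one]
      have h2 : star w * ((star y * y) * w) = star y * y := by
        calc star w * ((star y * y) * w)
            = 1 * (star w * ((star y * y) * w) * 1) := by rw [one_mul, mul_one]
          _ = (star y * star y') * (star w * ((star y * y) * w) * (y' * y)) := by
              rw [hyy, hinv₂]
          _ = star y * (star y' * (star w * ((star y * y) * w)) * y') * y := by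
              simp only [mul_assoc]
          _ = star y * y := h
      rw [← hmsq] at h2
      exact h2
    have h := congrArg (w * ·) e5
    simpa only [← mul_assoc, hw2, one_mul] using h
  -- closedness of N
  have hNclosed : IsClosed ((N : Set (H →L[ℂ] H))) := by
    rw [← N.centralizer_centralizer]
    exact isClosed_centralizer' _
  -- Step 2: m² commutes with every selfadjoint element of N of norm < 1
  rcases subsingleton_or_nontrivial H with hH | hH
  · intro a _; exact Subsingleton.elim _ _
  have key2 : ∀ b ∈ (N : Set (H →L[ℂ] H)), IsSelfAdjoint b → ‖b‖ < 1 →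
      (m * m) * b = b * (m * m) := by
    intro b hbN hbsa hbn
    set f : ℝ → ℝ := fun t => Real.sqrt (1 - t ^ 2) with hf
    have hfc : Continuous f := Real.continuous_sqrt.comp (continuous_const.sub (continuous_pow 2))
    set s : H →L[ℂ] H := cfc f b with hs
    have hsN : s ∈ (N : Set (H →L[ℂ] H)) := by
      exact cfc_mem_of_isClosed' hNclosed hbN hbsa f
    have hssa : IsSelfAdjoint s := cfc_predicate f b
    have hcomm : Commute b s := by
      have := cfc_commute_cfc (id : ℝ → ℝ) f b
      rwa [cfc_id ℝ b] at this
    have hsq : s * s = 1 - b * b := by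
      rw [hs, ← cfc_mul f f b hfc.continuousOn hfc.continuousOn]
      have h1 : (spectrum ℝ b).EqOn (fun t => f t * f t) (fun t => 1 - t ^ 2) := by
        intro t ht
        have htb : ‖t‖ ≤ ‖b‖ := spectrum.norm_le_norm_of_mem ht
        have : t ^ 2 ≤ 1 := by
          have h1 : |t| ≤ 1 := le_trans (by simpa using htb) hbn.le
          nlinarith [abs_nonneg t, sq_abs t]
        simp only [hf]
        exact Real.mul_self_sqrt (by linarith)
      rw [cfc_congr h1]
      rw [cfc_sub (fun _ => (1:ℝ)) (fun t => t ^ 2) b continuousOn_const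
        ((continuous_pow 2).continuousOn)]
      rw [show (fun _ : ℝ => (1:ℝ)) = (1 : ℝ → ℝ) from rfl, cfc_one ℝ b,
        cfc_pow_id b 2, pow_two]
    set w : H →L[ℂ] H := b + Complex.I • s with hw
    have hwstar : star w = b - Complex.I • s := by
      rw [hw, star_add, star_smul, hbsa.star_eq, hssa.star_eq, Complex.star_def,
        Complex.conj_I, neg_smul, ← sub_eq_add_neg]
    have hexpand1 : w * star w = b * b + s * s := by
      rw [hw, hwstar]
      simp only [add_mul, mul_sub, sub_mul, mul_add, smul_mul_assoc, mul_smul_comm,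
        smul_smul, Complex.I_mul_I, neg_smul, one_smul, hcomm.eq]
      match_scalars <;> simp [Complex.I_sq]
    have hexpand2 : star w * w = b * b + s * s := by
      rw [hw, hwstar]
      simp only [add_mul, mul_sub, sub_mul, mul_add, smul_mul_assoc, mul_smul_comm,
        smul_smul, Complex.I_mul_I, neg_smul, one_smul, hcomm.eq]
      match_scalars <;> simp [Complex.I_sq]
    have hbs1 : b * b + s * s = 1 := by rw [hsq]; abel
    have hwN : w ∈ (N : Set (H →L[ℂ] H)) := by
      exact N.toStarSubalgebra.add_mem hbN (N.toStarSubalgebra.smul_mem hsN _)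
    have hc1 := key w hwN (by rw [hexpand2, hbs1]) (by rw [hexpand1, hbs1])
    have hwsN : star w ∈ (N : Set (H →L[ℂ] H)) := star_mem hwN
    have hc2 := key (star w) hwsN (by rw [star_star, hexpand1, hbs1])
      (by rw [star_star, hexpand2, hbs1])
    have hsum : (m * m) * (w + star w) = (w + star w) * (m * m) := by
      rw [mul_add, add_mul, hc1, hc2]
    have hws : w + star w = b + b := by rw [hw, hwstar]; abel
    rw [hws, mul_add, add_mul] at hsum
    have h2 : (2:ℂ) • ((m * m) * b) = (2:ℂ) • (b * (m * m)) := by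
      rw [two_smul, two_smul]; exact hsum
    exact smul_right_injective _ two_ne_zero h2
  -- Step 2b: m² commutes with everything in N
  have key3 : ∀ a ∈ (N : Set (H →L[ℂ] H)), (m * m) * a = a * (m * m) := by
    have hsa : ∀ b ∈ (N : Set (H →L[ℂ] H)), IsSelfAdjoint b →
        (m * m) * b = b * (m * m) := by
      intro b hbN hbsa
      set r : ℝ := (1 + ‖b‖)⁻¹ with hr
      have hr0 : 0 < r := inv_pos.2 (by positivity)
      have hb'N : ((r : ℂ) • b) ∈ (N : Set (H →L[ℂ] H)) :=
        N.toStarSubalgebra.smul_mem hbN _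
      have hbsa' : IsSelfAdjoint ((r : ℂ) • b) := by
        rw [IsSelfAdjoint, star_smul, hbsa.star_eq, Complex.star_def, Complex.conj_ofReal]
      have hnorm : ‖(r : ℂ) • b‖ < 1 := by
        rw [norm_smul, Complex.norm_real, Real.norm_eq_abs, abs_of_pos hr0, hr,
          inv_mul_eq_div, div_lt_one (by positivity)]
        linarith
      have h := key2 _ hb'N hbsa' hnorm
      rw [mul_smul_comm, smul_mul_assoc] at h
      exact smul_right_injective _ (Complex.ofReal_ne_zero.2 hr0.ne') h
    intro a haN
    set b : H →L[ℂ] H := (1 / 2 : ℂ) • (a + star a) with hb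
    set d : H →L[ℂ] H := (-(Complex.I) / 2 : ℂ) • (a - star a) with hd
    have hbN : b ∈ (N : Set (H →L[ℂ] H)) :=
      N.toStarSubalgebra.smul_mem (add_mem haN (star_mem haN)) _
    have hdN : d ∈ (N : Set (H →L[ℂ] H)) :=
      N.toStarSubalgebra.smul_mem (sub_mem haN (star_mem haN)) _
    have hbsa : IsSelfAdjoint b := by
      rw [IsSelfAdjoint, hb, star_smul, star_add, star_star, add_comm (star a) a]
      congr 1
      simp [Complex.ext_iff]
    have hdsa : IsSelfAdjoint d := by
      rw [IsSelfAdjoint, hd, star_smul, star_sub, star_star, ← neg_sub a (star a), smul_neg,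
        ← neg_smul]
      congr 1
      simp [Complex.ext_iff]
      norm_num
    have hdecomp : a = b + Complex.I • d := by
      rw [hb, hd]
      match_scalars <;> simp [Complex.ext_iff] <;> ring
    have h1 := hsa b hbN hbsa
    have h2 := hsa d hdN hdsa
    rw [hdecomp, mul_add, add_mul, h1, mul_smul_comm, h2,
      smul_mul_assoc Complex.I d (m * m)]
  -- Step 3: m is a function of m², hence commutes with N too
  set S : StarSubalgebra ℂ (H →L[ℂ] H) := StarSubalgebra.centralizer ℂ (N : Set (H →L[ℂ] H))
    with hSdef
  have hSclosed : IsClosed (S : Set (H →L[ℂ] H)) := by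
    rw [hSdef, StarSubalgebra.coe_centralizer]
    exact isClosed_centralizer' _
  have hmmS : m * m ∈ S := by
    rw [hSdef, StarSubalgebra.mem_centralizer_iff]
    intro g hg
    exact ⟨(key3 g hg).symm, (key3 _ (star_mem hg)).symm⟩
  have hmmsa : IsSelfAdjoint (m * m) := by
    rw [IsSelfAdjoint, star_mul, hmsa.star_eq]
  have hm0 : (0 : H →L[ℂ] H) ≤ m := (ContinuousLinearMap.nonneg_iff_isPositive m).2 hmpos
  have hmm0 : (0 : H →L[ℂ] H) ≤ m * m := by
    have := star_mul_self_nonneg m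
    rwa [hmsa.star_eq] at this
  set s₀ : H →L[ℂ] H := cfc Real.sqrt (m * m) with hs₀
  have hs₀S : s₀ ∈ S := cfc_mem_of_isClosed' hSclosed hmmS hmmsa _
  have hs₀0 : (0 : H →L[ℂ] H) ≤ s₀ := cfc_nonneg fun t _ => Real.sqrt_nonneg t
  have hs₀sq : s₀ * s₀ = m * m := by
    rw [hs₀, ← cfc_mul _ _ _ Real.continuous_sqrt.continuousOn
      Real.continuous_sqrt.continuousOn]
    rw [cfc_congr (fun t ht => Real.mul_self_sqrt (spectrum_nonneg_of_nonneg hmm0 ht))]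
    exact cfc_id' ℝ (m * m)
  have hms : m = s₀ := by
    rw [← CFC.sqrt_unique (a := m * m) rfl hm0, CFC.sqrt_unique hs₀sq hs₀0]
  intro a haN
  rw [← hms] at hs₀S
  rw [hSdef, StarSubalgebra.mem_centralizer_iff] at hs₀S
  exact ((hs₀S a haN).1).symm
end

section
/- Let N be a von Neumann algebra, ψ₁, ψ₂: N → N *-automorphisms, and y₁, y₂ positive invertible elements of N. Then y₁ψ₁(x)y₁⁻¹ = y₂ψ₂(x)y₂⁻¹ for all x ∈ N if and only if ψ₁ = ψ₂ and y₂ = z y₁ for some positive invertible central element z ∈ Z(N). -/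
open scoped NNReal

section Helpers

lemma isClosed_set_centralizer {M : Type*} [TopologicalSpace M] [Mul M] [ContinuousMul M]
    [T2Space M] (s : Set M) : IsClosed (Set.centralizer s) := by
  have : Set.centralizer s = ⋂ m ∈ s, {x | m * x = x * m} := by
    ext x; simp [Set.mem_centralizer_iff, Set.mem_iInter]
  rw [this]
  exact isClosed_biInter fun m _ =>
    isClosed_eq (continuous_const.mul continuous_id) (continuous_id.mul continuous_const)

variable {B : Type*} [CStarAlgebra B]

lemma cfc_mem_elemental' (g : ℂ → ℂ) (a : B) [IsStarNormal a] :
    cfc g a ∈ StarAlgebra.elemental ℂ a := by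
  by_cases hg : ContinuousOn g (spectrum ℂ a)
  · rw [cfc_apply g a, cfcHom_eq_of_isStarNormal]
    exact Subtype.property _
  · rw [cfc_apply_of_not_continuousOn a hg]; exact zero_mem _

lemma commute_cfcC {a b : B} (ha : IsSelfAdjoint a) (hab : Commute b a) (g : ℂ → ℂ) :
    Commute b (cfc g a) := by
  have : IsStarNormal a := ha.isStarNormal
  set S : StarSubalgebra ℂ B := StarSubalgebra.centralizer ℂ (Set.centralizer {a}) with hS
  have hSclosed : IsClosed (S : Set B) := by
    rw [StarSubalgebra.coe_centralizer]
    exact isClosed_set_centralizer _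
  have haS : a ∈ S := by
    rw [StarSubalgebra.mem_centralizer_iff]
    intro c hc
    have h1 : a * c = c * a := hc a (Set.mem_singleton a)
    refine ⟨h1.symm, ?_⟩
    have h2 := congrArg star h1
    simp only [star_mul, ha.star_eq] at h2
    exact h2
  have hmem : cfc g a ∈ S :=
    StarAlgebra.elemental.le_of_mem hSclosed haS (cfc_mem_elemental' g a)
  have hb : b ∈ Set.centralizer ({a} : Set B) := by
    intro m hm; rw [Set.mem_singleton_iff] at hm; subst hm; exact hab.symm
  rw [StarSubalgebra.mem_centralizer_iff] at hmem
  exact (hmem b hb).1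

lemma commute_cfcR {a b : B} (ha : IsSelfAdjoint a) (hab : Commute b a) (f : ℝ → ℝ) :
    Commute b (cfc f a) := by
  rw [cfc_real_eq_complex f ha]
  exact commute_cfcC ha hab _

lemma central_unit_inv {M : Type*} [Monoid M] (u : Mˣ) (h : ∀ a, (u : M) * a = a * u)
    (a : M) : (↑u⁻¹ : M) * a = a * ↑u⁻¹ := by
  calc (↑u⁻¹ : M) * a = ↑u⁻¹ * a * (↑u * ↑u⁻¹) := by rw [Units.mul_inv, mul_one]
    _ = ↑u⁻¹ * (↑u * a) * ↑u⁻¹ := by rw [h a]; simp [mul_assoc]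
    _ = a * ↑u⁻¹ := by rw [Units.inv_mul_cancel_left]

end Helpers

set_option maxHeartbeats 1000000 in
/-- Uniqueness of the decomposition: for *-automorphisms ψ₁, ψ₂ of N and positive
invertible y₁, y₂ ∈ N, one has y₁ψ₁(·)y₁⁻¹ = y₂ψ₂(·)y₂⁻¹ iff ψ₁ = ψ₂ and y₂ = z y₁
for a positive invertible central z. -/
theorem stmt9 {H : Type*} [NormedAddCommGroup H] [InnerProductSpace ℂ H] [CompleteSpace H]
    (N : VonNeumannAlgebra H)
    (ψ₁ ψ₂ : ↥N.toStarSubalgebra ≃⋆ₐ[ℂ] ↥N.toStarSubalgebra)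
    (y₁ y₂ : (↥N.toStarSubalgebra)ˣ)
    (h₁ : ContinuousLinearMap.IsPositive ((y₁ : ↥N.toStarSubalgebra) : H →L[ℂ] H))
    (h₂ : ContinuousLinearMap.IsPositive ((y₂ : ↥N.toStarSubalgebra) : H →L[ℂ] H)) :
    (∀ x : ↥N.toStarSubalgebra, ↑y₁ * ψ₁ x * ↑y₁⁻¹ = ↑y₂ * ψ₂ x * ↑y₂⁻¹) ↔
      (ψ₁ = ψ₂ ∧ ∃ z : (↥N.toStarSubalgebra)ˣ,
        ContinuousLinearMap.IsPositive (((z : ↥N.toStarSubalgebra)) : H →L[ℂ] H) ∧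
        (∀ a : ↥N.toStarSubalgebra, (z : ↥N.toStarSubalgebra) * a = a * (z : ↥N.toStarSubalgebra)) ∧
        (y₂ : ↥N.toStarSubalgebra) = (z : ↥N.toStarSubalgebra) * (y₁ : ↥N.toStarSubalgebra)) := by
  set A := ↥N.toStarSubalgebra with hA
  have hstar : ∀ a : A, ((star a : A) : H →L[ℂ] H) = star (a : H →L[ℂ] H) := fun _ => rfl
  constructor
  · intro h
    -- self-adjointness facts in A
    have say1 : star (↑y₁ : A) = ↑y₁ := by
      apply Subtype.ext; rw [hstar]; exact h₁.isSelfAdjoint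
    have say2 : star (↑y₂ : A) = ↑y₂ := by
      apply Subtype.ext; rw [hstar]; exact h₂.isSelfAdjoint
    have si2 : star ((↑y₂⁻¹ : A)) = ↑y₂⁻¹ := by
      have h1 : star ((↑y₂⁻¹ : A)) * ↑y₂ = 1 := by
        rw [← say2, ← star_mul, Units.mul_inv, star_one]
      calc star ((↑y₂⁻¹ : A)) = star ((↑y₂⁻¹ : A)) * (↑y₂ * ↑y₂⁻¹) := by
            rw [Units.mul_inv, mul_one]
        _ = ↑y₂⁻¹ := by rw [← mul_assoc, h1, one_mul]
    -- the intertwiner w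
    set w : Aˣ := y₂⁻¹ * y₁ with hwdef
    have hw : ∀ x : A, (↑w : A) * ψ₁ x = ψ₂ x * ↑w := by
      intro x
      have hx := h x
      have h2 : (↑y₂⁻¹ : A) * (↑y₁ * ψ₁ x * ↑y₁⁻¹) * ↑y₁ = ↑y₂⁻¹ * (↑y₂ * ψ₂ x * ↑y₂⁻¹) * ↑y₁ := by
        rw [hx]
      simpa [hwdef, Units.val_mul, mul_assoc] using h2
    set φ : A ≃⋆ₐ[ℂ] A := ψ₁.symm.trans ψ₂ with hφdef
    have hwa : ∀ a : A, (↑w : A) * a = φ a * ↑w := by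
      intro a
      have := hw (ψ₁.symm a)
      rwa [ψ₁.apply_symm_apply] at this
    have hw2 : ∀ a : A, a * star (↑w : A) = star (↑w : A) * φ a := by
      intro a
      have := congrArg star (hwa (star a))
      rw [map_star, star_mul, star_mul, star_star, star_star] at this
      exact this
    set c : A := star (↑w : A) * ↑w with hcdef
    have hc : ∀ a : A, c * a = a * c := by
      intro a
      calc c * a = star (↑w : A) * ((↑w : A) * a) := by rw [hcdef, mul_assoc]
        _ = star (↑w : A) * φ a * ↑w := by rw [hwa a, mul_assoc]
        _ = a * star (↑w : A) * ↑w := by rw [← hw2 a]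
        _ = a * c := by rw [hcdef, mul_assoc]
    -- c as a unit
    have hcw : star (↑w : A) = ↑(y₁ * y₂⁻¹) := by
      rw [hwdef]
      simp only [Units.val_mul]
      rw [star_mul, say1, si2]
    set cu : Aˣ := y₁ * y₂⁻¹ * (y₂⁻¹ * y₁) with hcudef
    have hcu : (↑cu : A) = c := by
      rw [hcudef, hcdef, hcw, hwdef, Units.val_mul]
    -- pass to B := H →L[ℂ] H
    set C : H →L[ℂ] H := ((c : A) : H →L[ℂ] H) with hCdef
    have hC0 : 0 ≤ C := by
      rw [hCdef, hcdef, MulMemClass.coe_mul, hstar]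
      exact star_mul_self_nonneg _
    have hCsa : IsSelfAdjoint C := hC0.isSelfAdjoint
    have : IsStarNormal C := hCsa.isStarNormal
    have hCunit : IsUnit C := by
      rw [hCdef, ← hcu]
      exact (cu.isUnit).map (N.toStarSubalgebra.subtype : A →⋆ₐ[ℂ] (H →L[ℂ] H))
    have hCspec : ∀ x ∈ spectrum ℝ C, 0 < x := by
      intro x hx
      refine lt_of_le_of_ne (spectrum_nonneg_of_nonneg hC0 hx) ?_
      rintro rfl
      exact spectrum.zero_notMem ℝ hCunit hx
    -- functional calculus elements
    set f : ℝ → ℝ := fun x => (Real.sqrt x)⁻¹ with hfdef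
    set g : ℝ → ℝ := Real.sqrt with hgdef
    set r : ℝ → ℝ := fun x => Real.sqrt ((Real.sqrt x)⁻¹) with hrdef
    have hfc : ContinuousOn f (spectrum ℝ C) :=
      ContinuousOn.inv₀ Real.continuous_sqrt.continuousOn
        (fun x hx => Real.sqrt_ne_zero'.mpr (hCspec x hx))
    have hgc : ContinuousOn g (spectrum ℝ C) := Real.continuous_sqrt.continuousOn
    have hrc : ContinuousOn r (spectrum ℝ C) := Real.continuous_sqrt.comp_continuousOn hfc
    set d : H →L[ℂ] H := cfc f C with hddef
    set dinv : H →L[ℂ] H := cfc g C with hdinvdef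
    set s : H →L[ℂ] H := cfc r C with hsdef
    have hd0 : 0 ≤ d := cfc_nonneg (fun x hx => by positivity)
    have hssa : IsSelfAdjoint s := cfc_predicate _ _
    have hss : s * s = d := by
      rw [hsdef, ← cfc_mul r r C hrc hrc]
      exact cfc_congr fun x hx => Real.mul_self_sqrt (by positivity)
    have hinvc : ContinuousOn (fun x : ℝ => x⁻¹) (spectrum ℝ C) :=
      ContinuousOn.inv₀ continuousOn_id (fun x hx => ne_of_gt (hCspec x hx))
    have hdd : d * d = cfc (fun x : ℝ => x⁻¹) C := by
      rw [hddef, ← cfc_mul f f C hfc hfc]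
      exact cfc_congr fun x hx => by
        rw [hfdef]
        rw [← mul_inv, Real.mul_self_sqrt (le_of_lt (hCspec x hx))]
    have hddC : d * d * C = 1 := by
      have e1 : cfc (fun x : ℝ => x⁻¹) C * cfc (id : ℝ → ℝ) C = 1 := by
        rw [← cfc_mul _ _ C hinvc continuousOn_id]
        calc cfc (fun x : ℝ => x⁻¹ * id x) C = cfc (fun _ : ℝ => (1 : ℝ)) C :=
              cfc_congr (fun x hx => inv_mul_cancel₀ (ne_of_gt (hCspec x hx)))
          _ = 1 := cfc_const_one ℝ C
      rw [cfc_id ℝ C] at e1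
      rw [hdd]; exact e1
    have hd_dinv : d * dinv = 1 := by
      rw [hddef, hdinvdef, ← cfc_mul f g C hfc hgc]
      calc cfc (fun x : ℝ => f x * g x) C = cfc (fun _ : ℝ => (1 : ℝ)) C := by
            refine cfc_congr (fun x hx => ?_)
            rw [hfdef, hgdef]
            exact inv_mul_cancel₀ (Real.sqrt_ne_zero'.mpr (hCspec x hx))
        _ = 1 := cfc_const_one ℝ C
    have hdinv_d : dinv * d = 1 := by
      rw [hddef, hdinvdef, ← cfc_mul g f C hgc hfc]
      calc cfc (fun x : ℝ => g x * f x) C = cfc (fun _ : ℝ => (1 : ℝ)) C := by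
            refine cfc_congr (fun x hx => ?_)
            rw [hfdef, hgdef]
            exact mul_inv_cancel₀ (Real.sqrt_ne_zero'.mpr (hCspec x hx))
        _ = 1 := cfc_const_one ℝ C
    -- membership in N
    have hCmem : C ∈ N.toStarSubalgebra := c.property
    have key : ∀ f' : ℝ → ℝ, cfc f' C ∈ N.toStarSubalgebra := by
      intro f'
      have : cfc f' C ∈ (N : Set (H →L[ℂ] H)) := by
        rw [← N.centralizer_centralizer]
        rw [Set.mem_centralizer_iff]
        intro m hm
        exact commute_cfcR hCsa ((hm C hCmem).symm) f'
      exact this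
    set dA : A := ⟨d, key f⟩ with hdAdef
    set dA' : A := ⟨dinv, key g⟩ with hdA'def
    set z : Aˣ := ⟨dA, dA',
      Subtype.ext (by rw [MulMemClass.coe_mul]; exact hd_dinv),
      Subtype.ext (by rw [MulMemClass.coe_mul]; exact hdinv_d)⟩ with hzdef
    have hzpos : ContinuousLinearMap.IsPositive ((z : A) : H →L[ℂ] H) :=
      (ContinuousLinearMap.nonneg_iff_isPositive d).mp hd0
    have hzcA : ∀ a : A, (z : A) * a = a * (z : A) := by
      intro a
      apply Subtype.ext
      rw [MulMemClass.coe_mul, MulMemClass.coe_mul]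
      have hcomm : Commute ((a : H →L[ℂ] H)) C := by
        have h' := congrArg Subtype.val (hc a)
        rw [MulMemClass.coe_mul, MulMemClass.coe_mul] at h'
        exact (h').symm
      exact (commute_cfcR hCsa hcomm f).symm.eq
    -- notation for images in B
    set Y₁ : H →L[ℂ] H := ((y₁ : A) : H →L[ℂ] H) with hY1def
    set Y₂ : H →L[ℂ] H := ((y₂ : A) : H →L[ℂ] H) with hY2def
    have hcY1 : Commute Y₁ C := by
      have h' := congrArg Subtype.val (hc (y₁ : A))
      rw [MulMemClass.coe_mul, MulMemClass.coe_mul] at h'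
      exact h'.symm
    have hComY1d : Commute Y₁ d := commute_cfcR hCsa hcY1 f
    have hComY1s : Commute Y₁ s := commute_cfcR hCsa hcY1 r
    have hY10 : 0 ≤ Y₁ := (ContinuousLinearMap.nonneg_iff_isPositive Y₁).mpr h₁
    have hY20 : 0 ≤ Y₂ := (ContinuousLinearMap.nonneg_iff_isPositive Y₂).mpr h₂
    have hP0 : 0 ≤ d * Y₁ := by
      have e : d * Y₁ = star s * Y₁ * s := by
        calc d * Y₁ = s * (s * Y₁) := by rw [← hss, mul_assoc]
          _ = s * (Y₁ * s) := by rw [hComY1s.eq]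
          _ = star s * Y₁ * s := by rw [hssa.star_eq, mul_assoc]
      rw [e]
      exact star_left_conjugate_nonneg hY10 s
    -- the key algebraic identity
    have hcuy : cu * y₁ = y₁ * cu := by
      apply Units.ext
      show (↑cu : A) * ↑y₁ = ↑y₁ * ↑cu
      rw [hcu]; exact hc (y₁ : A)
    have hq : (y₂⁻¹ * y₂⁻¹) * y₁ = y₁ * (y₂⁻¹ * y₂⁻¹) := by
      have h' := hcuy
      rw [hcudef] at h'
      have h1 : y₁ * (y₂⁻¹ * (y₂⁻¹ * (y₁ * y₁))) = y₁ * (y₁ * (y₂⁻¹ * (y₂⁻¹ * y₁))) := by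
        simpa [mul_assoc] using h'
      have h2 := mul_left_cancel h1
      have h3 : (y₂⁻¹ * (y₂⁻¹ * y₁)) * y₁ = (y₁ * (y₂⁻¹ * y₂⁻¹)) * y₁ := by
        simpa [mul_assoc] using h2
      have h4 := mul_right_cancel h3
      simpa [mul_assoc] using h4
    have hq2 : (y₂ * y₂) * y₁ = y₁ * (y₂ * y₂) := by
      have hcm : Commute y₁ (y₂⁻¹ * y₂⁻¹) := hq.symm
      have hcm2 : Commute y₁ ((y₂ * y₂)⁻¹) := by rwa [mul_inv_rev]
      have hcm3 : Commute y₁ (y₂ * y₂) := by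
        have := hcm2.inv_right
        rwa [inv_inv] at this
      exact hcm3.symm.eq
    have hcy2u : cu * (y₂ * y₂) = y₁ * y₁ := by
      rw [hcudef]
      calc y₁ * y₂⁻¹ * (y₂⁻¹ * y₁) * (y₂ * y₂)
          = y₁ * (y₂⁻¹ * (y₂⁻¹ * (y₁ * (y₂ * y₂)))) := by simp [mul_assoc]
        _ = y₁ * (y₂⁻¹ * (y₂⁻¹ * ((y₂ * y₂) * y₁))) := by rw [hq2]
        _ = y₁ * y₁ := by simp [mul_assoc]
    have hcy2 : c * ((y₂ : A) * (y₂ : A)) = (y₁ : A) * (y₁ : A) := by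
      have h' : (↑cu : A) * ((y₂ : A) * (y₂ : A)) = (y₁ : A) * (y₁ : A) :=
        congrArg Units.val hcy2u
      rwa [hcu] at h'
    have hCy2 : C * (Y₂ * Y₂) = Y₁ * Y₁ := by
      have h' := congrArg Subtype.val hcy2
      rw [MulMemClass.coe_mul, MulMemClass.coe_mul] at h'
      exact h'
    have hPsq : (d * Y₁) * (d * Y₁) = Y₂ * Y₂ := by
      have e1 : (d * Y₁) * (d * Y₁) = d * d * (Y₁ * Y₁) := by
        calc d * Y₁ * (d * Y₁) = d * (Y₁ * d) * Y₁ := by simp [mul_assoc]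
          _ = d * (d * Y₁) * Y₁ := by rw [hComY1d.eq]
          _ = d * d * (Y₁ * Y₁) := by simp [mul_assoc]
      rw [e1, ← hCy2, ← mul_assoc, hddC, one_mul]
    have hY2dY1 : Y₂ = d * Y₁ := by
      have e1 := CFC.sqrt_mul_self (d * Y₁) hP0
      rw [hPsq, CFC.sqrt_mul_self Y₂ hY20] at e1
      exact e1
    have hy2A : (y₂ : A) = (z : A) * (y₁ : A) := by
      apply Subtype.ext
      rw [MulMemClass.coe_mul]
      exact hY2dY1
    have hyu : y₂ = z * y₁ := Units.ext (by rw [Units.val_mul]; exact hy2A)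
    have hzinvc := central_unit_inv z hzcA
    have hwz : (↑w : A) = ↑z⁻¹ := by
      rw [hwdef, hyu]
      calc ((((z * y₁)⁻¹ * y₁ : Aˣ)) : A) = ↑y₁⁻¹ * (↑z⁻¹ * ↑y₁) := by
            rw [mul_inv_rev]; simp [Units.val_mul, mul_assoc]
        _ = ↑y₁⁻¹ * (↑y₁ * ↑z⁻¹) := by rw [hzinvc (y₁ : A)]
        _ = ↑z⁻¹ := by rw [← mul_assoc, Units.inv_mul, one_mul]
    have hψ : ψ₁ = ψ₂ := by
      apply StarAlgEquiv.ext
      intro x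
      have hx := hw x
      rw [hwz, ← hzinvc (ψ₂ x)] at hx
      exact (Units.mul_right_inj z⁻¹).mp hx
    exact ⟨hψ, z, hzpos, hzcA, hy2A⟩

  · rintro ⟨rfl, z, hzpos, hzc, hze⟩
    intro x
    have hu : y₂ = z * y₁ := Units.ext (by rw [Units.val_mul]; exact hze)
    have hzc' := central_unit_inv z hzc
    calc (↑y₁ : A) * ψ₁ x * ↑y₁⁻¹
        = ↑y₁ * ψ₁ x * ↑y₁⁻¹ * (↑z * ↑z⁻¹) := by rw [Units.mul_inv, mul_one]
      _ = ↑z * (↑y₁ * ψ₁ x * ↑y₁⁻¹) * ↑z⁻¹ := by rw [hzc (↑y₁ * ψ₁ x * ↑y₁⁻¹)]; simp [mul_assoc]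
      _ = ↑y₂ * ψ₁ x * ↑y₂⁻¹ := by
          rw [hu, mul_inv_rev, Units.val_mul, Units.val_mul]
          simp [mul_assoc]
end

section
/- Let M be a von Neumann algebra and let g_i, g_j be Murray–von Neumann equivalent projections in M via a partial isometry w (w*w = g_i, ww* = g_j) with g_i g_j = 0. Define g' = (g_i + w + w* + g_j)/2 + (1 − g_i − g_j). Then g' is a projection satisfying g_i ∧ g' = g_j ∧ g' = 0 and g_i ∨ g' = g_j ∨ g' = 1. -/
variable {H : Type*} [NormedAddCommGroup H] [InnerProductSpace ℂ H] [CompleteSpace H]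

/-- If w implements an equivalence between orthogonal projections gᵢ, gⱼ of M, then
g' = (gᵢ + w + w* + gⱼ)/2 + (1 - gᵢ - gⱼ) is a projection with gᵢ ∧ g' = gⱼ ∧ g' = 0
and gᵢ ∨ g' = gⱼ ∨ g' = 1. -/
theorem stmt11 (M : VonNeumannAlgebra H) (gi gj w : H →L[ℂ] H)
    (hgi : IsProjIn M gi) (hgj : IsProjIn M gj)
    (hw : w ∈ M) (hwpi : w * star w * w = w)
    (hwi : star w * w = gi) (hwj : w * star w = gj)
    (horth : gi * gj = 0) :
    M.carrier ((2⁻¹ : ℂ) • (gi + w + star w + gj) + (1 - gi - gj)) ∧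
    IsProjIn M ((2⁻¹ : ℂ) • (gi + w + star w + gj) + (1 - gi - gj)) ∧
    -- gᵢ ∧ g' = 0 and gⱼ ∧ g' = 0 (trivial intersection of ranges):
    (∀ x : H, gi x = x →
      ((2⁻¹ : ℂ) • (gi + w + star w + gj) + (1 - gi - gj)) x = x → x = 0) ∧
    (∀ x : H, gj x = x →
      ((2⁻¹ : ℂ) • (gi + w + star w + gj) + (1 - gi - gj)) x = x → x = 0) ∧
    -- gᵢ ∨ g' = 1 and gⱼ ∨ g' = 1 (the sum of the ranges is dense):
    (LinearMap.range (gi : H →ₗ[ℂ] H) ⊔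
      LinearMap.range (((2⁻¹ : ℂ) • (gi + w + star w + gj) + (1 - gi - gj) : H →L[ℂ] H) : H →ₗ[ℂ] H)).topologicalClosure = ⊤ ∧
    (LinearMap.range (gj : H →ₗ[ℂ] H) ⊔
      LinearMap.range (((2⁻¹ : ℂ) • (gi + w + star w + gj) + (1 - gi - gj) : H →L[ℂ] H) : H →ₗ[ℂ] H)).topologicalClosure = ⊤ := by
  obtain ⟨hgiM, hgisa, hgi2⟩ := hgi
  obtain ⟨hgjM, hgjsa, hgj2⟩ := hgj
  -- basic operator relations
  have hgjgi : gj * gi = 0 := by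
    have := congrArg star horth
    rwa [star_mul, hgisa.star_eq, hgjsa.star_eq, star_zero] at this
  have h_gjw : gj * w = w := by rw [← hwj]; exact hwpi
  have h_wgi : w * gi = w := by rw [← hwi, ← mul_assoc]; exact hwpi
  have h_giw : gi * w = 0 := by rw [← h_gjw, ← mul_assoc, horth, zero_mul]
  have h_ww : w * w = 0 := by
    nth_rewrite 1 [← h_wgi]
    rw [mul_assoc, h_giw, mul_zero]
  have h_wgj : w * gj = 0 := by rw [← hwj, ← mul_assoc, h_ww, zero_mul]
  have h_sgj : star w * gj = star w := by
    have := congrArg star h_gjw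
    rwa [star_mul, hgjsa.star_eq] at this
  have h_gis : gi * star w = star w := by
    have := congrArg star h_wgi
    rwa [star_mul, hgisa.star_eq] at this
  have h_sgi : star w * gi = 0 := by
    have := congrArg star h_giw
    rwa [star_mul, hgisa.star_eq, star_zero] at this
  have h_gjs : gj * star w = 0 := by
    have := congrArg star h_wgj
    rwa [star_mul, hgjsa.star_eq, star_zero] at this
  have h_ss : star w * star w = 0 := by
    have := congrArg star h_ww
    rwa [star_mul, star_zero] at this
  set s : H →L[ℂ] H := gi + w + star w + gj with hs_def
  set q : H →L[ℂ] H := 1 - gi - gj with hq_def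
  set g' : H →L[ℂ] H := (2⁻¹ : ℂ) • s + q with hg'_def
  have hss : s * s = s + s := by
    simp only [hs_def, mul_add, add_mul, hgi2.eq, hgj2.eq, h_giw, h_gis, horth, hgjgi,
      h_wgi, h_ww, h_wgj, hwi, hwj, h_sgi, h_ss, h_sgj, h_gjw, h_gjs]
    abel
  have hsq : s * q = 0 := by
    simp only [hs_def, hq_def, mul_sub, mul_one, add_mul, hgi2.eq, hgj2.eq, h_giw, h_gis,
      horth, hgjgi, h_wgi, h_ww, h_wgj, h_sgi, h_ss, h_sgj, h_gjw, h_gjs]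
    abel
  have hqs : q * s = 0 := by
    simp only [hs_def, hq_def, sub_mul, one_mul, mul_add, hgi2.eq, hgj2.eq, h_giw, h_gis,
      horth, hgjgi, h_wgi, h_ww, h_wgj, h_sgi, h_ss, h_sgj, h_gjw, h_gjs]
    abel
  have hqq : q * q = q := by
    simp only [hq_def, mul_sub, sub_mul, mul_one, one_mul, hgi2.eq, hgj2.eq, horth, hgjgi]
    abel
  have hg'2 : IsIdempotentElem g' := by
    show g' * g' = g'
    rw [hg'_def]
    simp only [add_mul, mul_add, smul_mul_assoc, mul_smul_comm, hss, hsq, hqs, hqq,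
      smul_zero, smul_add]
    module
  have hssa : IsSelfAdjoint s := by
    rw [IsSelfAdjoint, hs_def]
    simp only [star_add, star_star, hgisa.star_eq, hgjsa.star_eq]
    abel
  have hg'sa : IsSelfAdjoint g' := by
    rw [IsSelfAdjoint, hg'_def, hq_def]
    simp only [star_add, star_sub, star_smul, star_one, hgisa.star_eq, hgjsa.star_eq,
      hssa.star_eq]
    norm_num
  have hg'M : g' ∈ M := by
    have hsM : s ∈ M := add_mem (add_mem (add_mem hgiM hw) (star_mem hw)) hgjM
    have h2 : (2⁻¹ : ℂ) • s ∈ M := M.toSubalgebra.smul_mem hsM _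
    exact add_mem h2 (sub_mem (sub_mem (one_mem M) hgiM) hgjM)
  -- pointwise helpers
  have apmul : ∀ (a b : H →L[ℂ] H) (x : H), a (b x) = (a * b) x := fun a b x => rfl
  have hmeet_i : ∀ x : H, gi x = x → g' x = x → x = 0 := by
    intro x hx hg'x
    have hgjx : gj x = 0 := by rw [← hx, apmul, hgjgi]; rfl
    have hswx : star w x = 0 := by rw [← hx, apmul, h_sgi]; rfl
    have hqx : q x = 0 := by
      simp only [hq_def, ContinuousLinearMap.sub_apply, ContinuousLinearMap.one_apply,
        hx, hgjx]
      abel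
    have hsx : s x = x + w x := by
      simp only [hs_def, ContinuousLinearMap.add_apply, hx, hswx, hgjx]
      abel
    have h1 : (2⁻¹ : ℂ) • (x + w x) = x := by
      have := hg'x
      rw [hg'_def] at this
      simpa [ContinuousLinearMap.add_apply, ContinuousLinearMap.smul_apply, hsx, hqx]
        using this
    have hwx : w x = x := by linear_combination (norm := module) (2 : ℂ) • h1
    have : gj x = x := by rw [← hwx, apmul, h_gjw, hwx]
    rw [hgjx] at this; exact this.symm
  have hmeet_j : ∀ x : H, gj x = x → g' x = x → x = 0 := by
    intro x hx hg'x
    have hgix : gi x = 0 := by rw [← hx, apmul, horth]; rfl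
    have hwx : w x = 0 := by rw [← hx, apmul, h_wgj]; rfl
    have hqx : q x = 0 := by
      simp only [hq_def, ContinuousLinearMap.sub_apply, ContinuousLinearMap.one_apply,
        hx, hgix]
      abel
    have hsx : s x = x + star w x := by
      simp only [hs_def, ContinuousLinearMap.add_apply, hx, hwx, hgix]
      abel
    have h1 : (2⁻¹ : ℂ) • (x + star w x) = x := by
      have := hg'x
      rw [hg'_def] at this
      simpa [ContinuousLinearMap.add_apply, ContinuousLinearMap.smul_apply, hsx, hqx]
        using this
    have hswx : star w x = x := by linear_combination (norm := module) (2 : ℂ) • h1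
    have : gi x = x := by rw [← hswx, apmul, h_gis, hswx]
    rw [hgix] at this; exact this.symm
  -- from orthogonality to kernel
  have hker : ∀ (A : H →L[ℂ] H), IsSelfAdjoint A → ∀ x : H,
      (∀ y : H, (inner ℂ (A y) x : ℂ) = 0) → A x = 0 := by
    intro A hA x hx
    have hsym := hA.isSymmetric
    have h0 := hx (A x)
    rw [show (A (A x)) = (A : H →ₗ[ℂ] H) (A x) from rfl, hsym (A x) x] at h0
    exact inner_self_eq_zero.mp h0
  -- join arguments
  have hjoin : ∀ (g : H →L[ℂ] H), IsSelfAdjoint g →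
      (∀ x : H, g x = 0 → g' x = 0 → x = 0) →
      (LinearMap.range (g : H →ₗ[ℂ] H) ⊔ LinearMap.range (g' : H →ₗ[ℂ] H)).topologicalClosure = ⊤ := by
    intro g hgsa hzero
    rw [Submodule.topologicalClosure_eq_top_iff]
    rw [Submodule.eq_bot_iff]
    intro x hx
    rw [Submodule.mem_orthogonal] at hx
    have hgx : g x = 0 := by
      refine hker g hgsa x fun y => hx _ ?_
      exact Submodule.mem_sup_left ⟨y, rfl⟩
    have hg'x : g' x = 0 := by
      refine hker g' hg'sa x fun y => hx _ ?_
      exact Submodule.mem_sup_right ⟨y, rfl⟩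
    exact hzero x hgx hg'x
  have hzero_i : ∀ x : H, gi x = 0 → g' x = 0 → x = 0 := by
    intro x hgix hg'x
    have hqx : q x = 0 := by
      have : (q * g') x = q x := by rw [mul_add, mul_smul_comm, hqs, hqq, smul_zero, zero_add]
      rw [← this, ← apmul, hg'x, map_zero]
    have hx_eq : x = gj x := by
      have : x - gi x - gj x = 0 := by
        simpa [hq_def, ContinuousLinearMap.sub_apply, sub_eq_zero] using hqx
      rw [hgix] at this
      have : x - gj x = 0 := by rw [← this]; abel
      rw [sub_eq_zero] at this; exact this
    have hgjg' : (gj * g') x = 0 := by rw [← apmul, hg'x, map_zero]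
    have hexp : gj * g' = (2⁻¹ : ℂ) • (w + gj) := by
      rw [hg'_def, mul_add, mul_smul_comm, hs_def, hq_def]
      simp only [mul_add, mul_sub, mul_one, hgjgi, h_gjw, h_gjs, hgj2.eq]
      module
    have hwgj : w x + gj x = 0 := by
      rw [hexp, ContinuousLinearMap.smul_apply, smul_eq_zero] at hgjg'
      have := hgjg'.resolve_left (by norm_num)
      simpa [ContinuousLinearMap.add_apply] using this
    have hwx : w x = -x := by
      have : w x = -gj x := by linear_combination (norm := module) hwgj
      rw [this, ← hx_eq]
    have : (w * w) x = x := by rw [← apmul, hwx, map_neg, hwx, neg_neg]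
    rw [h_ww] at this
    simpa using this.symm
  have hzero_j : ∀ x : H, gj x = 0 → g' x = 0 → x = 0 := by
    intro x hgjx hg'x
    have hqx : q x = 0 := by
      have : (q * g') x = q x := by rw [mul_add, mul_smul_comm, hqs, hqq, smul_zero, zero_add]
      rw [← this, ← apmul, hg'x, map_zero]
    have hx_eq : x = gi x := by
      have : x - gi x - gj x = 0 := by
        simpa [hq_def, ContinuousLinearMap.sub_apply, sub_eq_zero] using hqx
      rw [hgjx] at this
      have : x - gi x = 0 := by rw [← this]; abel
      rw [sub_eq_zero] at this; exact this
    have hgig' : (gi * g') x = 0 := by rw [← apmul, hg'x, map_zero]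
    have hexp : gi * g' = (2⁻¹ : ℂ) • (gi + star w) := by
      rw [hg'_def, mul_add, mul_smul_comm, hs_def, hq_def]
      simp only [mul_add, mul_sub, mul_one, horth, h_giw, h_gis, hgi2.eq]
      module
    have hswgi : gi x + star w x = 0 := by
      rw [hexp, ContinuousLinearMap.smul_apply, smul_eq_zero] at hgig'
      have := hgig'.resolve_left (by norm_num)
      simpa [ContinuousLinearMap.add_apply] using this
    have hswx : star w x = -x := by
      have : star w x = -gi x := by linear_combination (norm := module) hswgi
      rw [this, ← hx_eq]
    have : (star w * star w) x = x := by rw [← apmul, hswx, map_neg, hswx, neg_neg]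
    rw [h_ss] at this
    simpa using this.symm
  exact ⟨hg'M, ⟨hg'M, hg'sa, hg'2⟩, hmeet_i, hmeet_j,
    hjoin gi hgisa hzero_i, hjoin gj hgjsa hzero_j⟩
end
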